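/- Let X be a compact metric space, μ₀ a Borel probability measure on X, and for each N let H^{(N)} : X^N → ℝ be a symmetric lower semicontinuous (hence bounded below) Borel function. Let β₀ < 0 and assume Z_{N,β} := ∫_{X^N} e^{−β H^{(N)}} dμ₀^{⊗N} < ∞ for all β ≥ β₀ and all N. Assume there is a functional E : M₁(X) → (−∞,∞] with E(μ₀) finite such that for every β ≥ β₀, lim_{N→∞} −(1/N) log Z_{N,β} = f(β) := inf_{μ ∈ M₁(X)} ( βE(μ) + D_{μ₀}(μ) ) > −∞. If moreover the (concave) function f is differentiable at β = 0, then the mean energy lim_{N→∞} (1/N) ∫_{X^N} H^{(N)} dμ₀^{⊗N} exists and equals E(μ₀). -/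
import Mathlib


open MeasureTheory Filter Classical

/-- The relative entropy `D_{μ₀}(μ) := ∫ log(dμ/dμ₀) dμ` if `μ ≪ μ₀` (with the convention
`+∞` when the log-likelihood ratio is not integrable), and `+∞` otherwise. -/
noncomputable def relEntropy {X : Type*} [MeasurableSpace X] (μ₀ μ : Measure X) : EReal :=
  if μ ≪ μ₀ ∧ Integrable (llr μ μ₀) μ then ((∫ x, llr μ μ₀ x ∂μ : ℝ) : EReal) else ⊤


lemma relEntropy_self {X : Type*} [MeasurableSpace X] (μ₀ : Measure X) [IsProbabilityMeasure μ₀] :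
    relEntropy μ₀ μ₀ = 0 := by
  have hllr : llr μ₀ μ₀ =ᵐ[μ₀] fun _ => (0 : ℝ) := by
    filter_upwards [μ₀.rnDeriv_self] with x hx
    simp [llr, hx]
  rw [relEntropy, if_pos ⟨Measure.AbsolutelyContinuous.refl μ₀,
      (integrable_const (0:ℝ)).congr hllr.symm⟩]
  rw [integral_congr_ae hllr]
  simp

/-- If the partition functions `Z_{N,β} = ∫_{X^N} e^{−βH^{(N)}} dμ₀^{⊗N}` are
finite for all `β ≥ β₀` (with `β₀ < 0`) and satisfy
`lim_N −(1/N) log Z_{N,β} = f(β) := inf_{μ ∈ M₁(X)} (β E(μ) + D_{μ₀}(μ)) > −∞` for all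
`β ≥ β₀`, with `E(μ₀)` finite, and if `f` is differentiable at `β = 0`, then the mean energy
`lim_N (1/N) ∫_{X^N} H^{(N)} dμ₀^{⊗N}` exists and equals `E(μ₀)`. -/
theorem stmt6 {X : Type*} [MetricSpace X] [CompactSpace X] [MeasurableSpace X] [BorelSpace X]
    (μ₀ : Measure X) [IsProbabilityMeasure μ₀]
    (H : (N : ℕ) → (Fin N → X) → ℝ)
    (hsym : ∀ (N : ℕ) (σ : Equiv.Perm (Fin N)) (x : Fin N → X), H N (x ∘ σ) = H N x)
    (hlsc : ∀ N, LowerSemicontinuous (H N))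
    (hmeas : ∀ N, Measurable (H N))
    (β₀ : ℝ) (hβ₀ : β₀ < 0)
    (hZfin : ∀ β : ℝ, β₀ ≤ β → ∀ N : ℕ,
      (∫⁻ x, ENNReal.ofReal (Real.exp (-β * H N x)) ∂(Measure.pi fun _ : Fin N => μ₀)) ≠ ⊤)
    (E : ProbabilityMeasure X → EReal)
    (hEbot : ∀ μ, E μ ≠ ⊥)
    (hEfin : E ⟨μ₀, inferInstance⟩ ≠ ⊤)
    (f : ℝ → ℝ)
    (hf : ∀ β : ℝ, β₀ ≤ β →
      ((f β : ℝ) : EReal)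
        = ⨅ μ : ProbabilityMeasure X, ((β : EReal) * E μ + relEntropy μ₀ (μ : Measure X)))
    (hlim : ∀ β : ℝ, β₀ ≤ β →
      Tendsto (fun N : ℕ =>
          -(1 / (N : ℝ)) * Real.log
            ((∫⁻ x, ENNReal.ofReal (Real.exp (-β * H N x))
                ∂(Measure.pi fun _ : Fin N => μ₀)).toReal))
        atTop (nhds (f β)))
    (hdiff : DifferentiableAt ℝ f 0) :
    ∃ r : ℝ, E ⟨μ₀, inferInstance⟩ = (r : EReal) ∧
      Tendsto (fun N : ℕ =>
          (1 / (N : ℝ)) * ∫ x, H N x ∂(Measure.pi fun _ : Fin N => μ₀))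
        atTop (nhds r) := by
  set P : (N : ℕ) → Measure (Fin N → X) := fun N => Measure.pi (fun _ : Fin N => μ₀) with hP
  have hPprob : ∀ N, IsProbabilityMeasure (P N) := fun N => by infer_instance
  set r : ℝ := (E ⟨μ₀, inferInstance⟩).toReal with hrdef
  have hr : E ⟨μ₀, inferInstance⟩ = (r : EReal) := (EReal.coe_toReal hEfin (hEbot _)).symm
  refine ⟨r, hr, ?_⟩
  -- notation
  set Z : ℕ → ℝ → ENNReal := fun N β => ∫⁻ x, ENNReal.ofReal (Real.exp (-β * H N x)) ∂(P N)
    with hZdef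
  set a : ℕ → ℝ := fun N => (1 / (N : ℝ)) * ∫ x, H N x ∂(P N) with hadef
  -- f β ≤ β * r for β ≥ β₀
  have f_le : ∀ β : ℝ, β₀ ≤ β → f β ≤ β * r := by
    intro β hβ
    have h1 : ((f β : ℝ) : EReal) ≤ (β : EReal) * E ⟨μ₀, inferInstance⟩
        + relEntropy μ₀ ((⟨μ₀, inferInstance⟩ : ProbabilityMeasure X) : Measure X) := by
      rw [hf β hβ]
      exact iInf_le (fun μ : ProbabilityMeasure X =>
        (β : EReal) * E μ + relEntropy μ₀ (μ : Measure X)) ⟨μ₀, inferInstance⟩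
    have h2 : ((⟨μ₀, inferInstance⟩ : ProbabilityMeasure X) : Measure X) = μ₀ := rfl
    rw [h2, relEntropy_self, hr, add_zero, ← EReal.coe_mul] at h1
    exact_mod_cast h1
  -- f 0 = 0
  have f0 : f 0 = 0 := by
    have h := hlim 0 hβ₀.le
    have h0 : (fun N : ℕ =>
        -(1 / (N : ℝ)) * Real.log
          ((∫⁻ x, ENNReal.ofReal (Real.exp (-(0:ℝ) * H N x))
              ∂(Measure.pi fun _ : Fin N => μ₀)).toReal)) = fun _ => (0:ℝ) := by
      funext N
      have : ∀ x : Fin N → X, ENNReal.ofReal (Real.exp (-(0:ℝ) * H N x)) = 1 := by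
        intro x; simp
      simp only [this, lintegral_one]
      haveI := hPprob N
      simp [hP]
    rw [h0] at h
    exact tendsto_nhds_unique h tendsto_const_nhds
  -- integrability of exp(-β H N) for β ≥ β₀
  have hint : ∀ β : ℝ, β₀ ≤ β → ∀ N, Integrable (fun x => Real.exp (-β * H N x)) (P N) := by
    intro β hβ N
    haveI := hPprob N
    refine ⟨(Real.measurable_exp.comp ((hmeas N).const_mul (-β))).aestronglyMeasurable, ?_⟩
    rw [hasFiniteIntegral_iff_ofReal (Eventually.of_forall fun x => (Real.exp_pos _).le)]
    exact (hZfin β hβ N).lt_top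
  -- integrability of H N
  have hHint : ∀ N, Integrable (H N) (P N) := by
    intro N
    haveI := hPprob N
    have hg : Integrable
        (fun x => Real.exp (-β₀ * H N x) / (-β₀) + Real.exp (-(1:ℝ) * H N x)) (P N) :=
      ((hint β₀ le_rfl N).div_const _).add (hint 1 (by linarith) N)
    refine hg.mono' ((hmeas N).aestronglyMeasurable) (Eventually.of_forall fun x => ?_)
    have hε : (0:ℝ) < -β₀ := by linarith
    rcases le_total 0 (H N x) with hx | hx
    · have h1 : -β₀ * H N x ≤ Real.exp (-β₀ * H N x) := by
        have := Real.add_one_le_exp (-β₀ * H N x); linarith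
      have h2 : H N x ≤ Real.exp (-β₀ * H N x) / (-β₀) := by
        rw [le_div_iff₀ hε]; linarith [h1]
      have h3 : (0:ℝ) ≤ Real.exp (-(1:ℝ) * H N x) := (Real.exp_pos _).le
      rw [Real.norm_eq_abs, abs_of_nonneg hx]
      linarith
    · have h1 : -(1:ℝ) * H N x ≤ Real.exp (-(1:ℝ) * H N x) := by
        have := Real.add_one_le_exp (-(1:ℝ) * H N x); linarith
      have h3 : (0:ℝ) ≤ Real.exp (-β₀ * H N x) / (-β₀) :=
        div_nonneg (Real.exp_pos _).le (by linarith)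
      rw [Real.norm_eq_abs, abs_of_nonpos hx]
      linarith
  -- Jensen: for β ≥ β₀, -β * ∫ H ≤ log Z
  have jensen : ∀ β : ℝ, β₀ ≤ β → ∀ N,
      -β * ∫ x, H N x ∂(P N) ≤ Real.log ((Z N β).toReal) := by
    intro β hβ N
    haveI := hPprob N
    have hfi : Integrable (fun x => -β * H N x) (P N) := (hHint N).const_mul _
    have hexp : Real.exp (∫ x, -β * H N x ∂(P N)) ≤ ∫ x, Real.exp (-β * H N x) ∂(P N) :=
      convexOn_exp.map_integral_le Real.continuous_exp.continuousOn isClosed_univ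
        (Eventually.of_forall fun x => trivial) hfi (by exact hint β hβ N)
    have hZ : (Z N β).toReal = ∫ x, Real.exp (-β * H N x) ∂(P N) := by
      rw [integral_eq_lintegral_of_nonneg_ae (Eventually.of_forall fun x => (Real.exp_pos _).le)
        (Real.measurable_exp.comp ((hmeas N).const_mul (-β))).aestronglyMeasurable]
    rw [integral_const_mul] at hexp
    have hpos : 0 < (Z N β).toReal := by
      rw [hZ]; exact lt_of_lt_of_le (Real.exp_pos _) hexp
    rw [Real.le_log_iff_exp_le hpos, hZ]
    exact hexp
  -- key inequality : gN β ≤ β * a N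
  have key : ∀ β : ℝ, β₀ ≤ β → ∀ N : ℕ,
      -(1 / (N : ℝ)) * Real.log ((Z N β).toReal) ≤ β * a N := by
    intro β hβ N
    have hN : (0:ℝ) ≤ 1 / (N : ℝ) := by positivity
    have h := jensen β hβ N
    have := mul_le_mul_of_nonneg_left h hN
    simp only [hadef]
    nlinarith [this]
  -- slope of f tends to r
  have hslope : Tendsto (fun β => f β / β) (nhdsWithin 0 {(0:ℝ)}ᶜ) (nhds (deriv f 0)) := by
    have h := hdiff.hasDerivAt
    rw [hasDerivAt_iff_tendsto_slope] at h
    refine h.congr' ?_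
    filter_upwards [self_mem_nhdsWithin] with β hβ
    simp [slope, f0, div_eq_inv_mul]
  have hslope_right : Tendsto (fun β => f β / β) (nhdsWithin 0 (Set.Ioi 0)) (nhds (deriv f 0)) :=
    hslope.mono_left (nhdsWithin_mono _ (fun x hx => ne_of_gt hx))
  have hslope_left : Tendsto (fun β => f β / β) (nhdsWithin 0 (Set.Iio 0)) (nhds (deriv f 0)) :=
    hslope.mono_left (nhdsWithin_mono _ (fun x hx => ne_of_lt hx))
  -- deriv f 0 = r
  have hd : deriv f 0 = r := by
    have h1 : deriv f 0 ≤ r := by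
      refine le_of_tendsto hslope_right ?_
      filter_upwards [self_mem_nhdsWithin] with β (hβ : 0 < β)
      rw [div_le_iff₀ hβ]
      have := f_le β (by linarith)
      linarith [this]
    have h2 : r ≤ deriv f 0 := by
      refine ge_of_tendsto hslope_left ?_
      rw [eventually_nhdsWithin_iff]
      filter_upwards [eventually_gt_nhds hβ₀] with β hβ (hβ0 : β < 0)
      rw [le_div_iff_of_neg hβ0]
      have := f_le β hβ.le
      linarith [this]
    linarith
  rw [hd] at hslope_right hslope_left
  -- conclusion
  rw [tendsto_order]
  constructor
  · intro b hb
    have hev : ∀ᶠ β in nhdsWithin 0 (Set.Ioi 0), b < f β / β :=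
      hslope_right.eventually (eventually_gt_nhds hb)
    obtain ⟨β, hβgt, hβpos⟩ := (hev.and self_mem_nhdsWithin).exists
    replace hβpos : (0:ℝ) < β := hβpos
    have hβ : β₀ ≤ β := by linarith
    have hfb : β * b < f β := by
      have := (lt_div_iff₀ hβpos).1 hβgt
      linarith
    have hev2 : ∀ᶠ N : ℕ in atTop,
        β * b < -(1 / (N : ℝ)) * Real.log ((Z N β).toReal) :=
      (hlim β hβ).eventually (eventually_gt_nhds hfb)
    filter_upwards [hev2] with N hN
    have hbb : β * b < β * a N := lt_of_lt_of_le hN (key β hβ N)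
    by_contra h
    push_neg at h
    nlinarith
  · intro b hb
    have hev : ∀ᶠ β in nhdsWithin 0 (Set.Iio 0), f β / β < b ∧ β₀ < β :=
      (hslope_left.eventually (eventually_lt_nhds hb)).and
        ((eventually_gt_nhds hβ₀).filter_mono nhdsWithin_le_nhds)
    obtain ⟨β, ⟨hβlt, hβ⟩, hβneg⟩ := (hev.and self_mem_nhdsWithin).exists
    replace hβneg : β < (0:ℝ) := hβneg
    have hfb : β * b < f β := by
      have := (div_lt_iff_of_neg hβneg).1 hβlt
      linarith
    have hev2 : ∀ᶠ N : ℕ in atTop,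
        β * b < -(1 / (N : ℝ)) * Real.log ((Z N β).toReal) :=
      (hlim β hβ.le).eventually (eventually_gt_nhds hfb)
    filter_upwards [hev2] with N hN
    have hbb : β * b < β * a N := lt_of_lt_of_le hN (key β hβ.le N)
    by_contra h
    push_neg at h
    nlinarith
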